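/- Let Δ be the n × n matrix of arc-length distances between n points equally spaced (at spacing L/n) along a closed rectifiable curve of total length L, so Δᵢⱼ = (L/n)·min(|i-j|, n-|i-j|). Then Δ depends only on n and L, not on the shape of the curve, and for n ≥ 4 the matrix Δ is not a matrix of Euclidean distances (not EDM-1), i.e., the doubly-centered matrix -(1/2) P [Δᵢⱼ²] P has a negative eigenvalue. -/

import Mathlib

open Matrix

/-- The centering matrix P = I - (1/n) e eᵀ. -/
noncomputable def centeringMatrix (n : ℕ) : Matrix (Fin n) (Fin n) ℝ :=
  1 - (n : ℝ)⁻¹ • Matrix.of (fun _ _ => (1 : ℝ))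


lemma schoenberg_aux {n p : ℕ} (v : Fin n → ℝ) (hv : ∑ i, v i = 0)
    (z : Fin n → EuclideanSpace ℝ (Fin p)) :
    ∑ i, ∑ j, v i * v j * ‖z i - z j‖ ^ 2 ≤ 0 := by
  have hinner : ∑ i, ∑ j, v i * v j * (inner ℝ (z i) (z j) : ℝ)
      = ‖∑ i, v i • z i‖ ^ 2 := by
    rw [← real_inner_self_eq_norm_sq, sum_inner]
    refine Finset.sum_congr rfl fun i _ => ?_
    rw [inner_sum]
    refine Finset.sum_congr rfl fun j _ => ?_
    rw [real_inner_smul_left, real_inner_smul_right]; ring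
  have key : ∑ i, ∑ j, v i * v j * ‖z i - z j‖ ^ 2
      = -2 * ‖∑ i, v i • z i‖ ^ 2 := by
    rw [← hinner]
    have step : ∑ i, ∑ j, v i * v j * ‖z i - z j‖ ^ 2
        = ∑ i, ∑ j, (v i * v j * ‖z i‖ ^ 2 - 2 * (v i * v j * inner ℝ (z i) (z j)) + v i * v j * ‖z j‖ ^ 2) := by
      refine Finset.sum_congr rfl fun i _ => Finset.sum_congr rfl fun j _ => ?_
      rw [norm_sub_sq_real]; ring
    rw [step]
    simp only [Finset.sum_add_distrib, Finset.sum_sub_distrib]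
    have h1 : ∑ i : Fin n, ∑ j : Fin n, v i * v j * ‖z i‖ ^ 2 = 0 := by
      simp only [← Finset.sum_mul, ← Finset.mul_sum]
      rw [hv]; simp
    have h2 : ∑ i : Fin n, ∑ j : Fin n, v i * v j * ‖z j‖ ^ 2 = 0 := by
      rw [Finset.sum_comm]
      simp only [← Finset.sum_mul, ← Finset.mul_sum]
      rw [hv]; simp
    rw [h1, h2]; simp only [← Finset.mul_sum]; ring
  rw [key]
  nlinarith [sq_nonneg ‖∑ i, v i • z i‖]

lemma quad_pos (n : ℕ) (hn : 4 ≤ n) (L : ℝ) (hL : 0 < L)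
    (Δ : Matrix (Fin n) (Fin n) ℝ)
    (hΔ : ∀ i j : Fin n, Δ i j =
      (L / n) * (min ((i : ℤ) - (j : ℤ)).natAbs (n - ((i : ℤ) - (j : ℤ)).natAbs) : ℕ)) :
    ∃ v : Fin n → ℝ, (∑ i, v i = 0) ∧ 0 < ∑ i, ∑ j, v i * v j * (Δ i j) ^ 2 := by
  set m := n / 2 with hm
  have hmn : 2 * m ≤ n ∧ n ≤ 2 * m + 1 ∧ 2 ≤ m := by omega
  obtain ⟨i0, hi0⟩ : ∃ i : Fin n, (i : ℕ) = 0 := ⟨⟨0, by omega⟩, rfl⟩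
  obtain ⟨i1, hi1⟩ : ∃ i : Fin n, (i : ℕ) = 1 := ⟨⟨1, by omega⟩, rfl⟩
  obtain ⟨i2, hi2⟩ : ∃ i : Fin n, (i : ℕ) = m := ⟨⟨m, by omega⟩, rfl⟩
  obtain ⟨i3, hi3⟩ : ∃ i : Fin n, (i : ℕ) = m + 1 := ⟨⟨m + 1, by omega⟩, rfl⟩
  have h01 : i0 ≠ i1 := fun h => by rw [h] at hi0; omega
  have h02 : i0 ≠ i2 := fun h => by rw [h] at hi0; omega
  have h03 : i0 ≠ i3 := fun h => by rw [h] at hi0; omega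
  have h12 : i1 ≠ i2 := fun h => by rw [h] at hi1; omega
  have h13 : i1 ≠ i3 := fun h => by rw [h] at hi1; omega
  have h23 : i2 ≠ i3 := fun h => by rw [h] at hi2; omega
  set v : Fin n → ℝ := fun i =>
    if i = i0 then 1 else if i = i1 then -1 else if i = i2 then 1 else
      if i = i3 then -1 else 0 with hv
  have hkey : ∀ f : Fin n → ℝ, ∑ j, f j * v j = f i0 - f i1 + f i2 - f i3 := by
    intro f
    have h1 : ∀ j ∈ Finset.univ, j ∉ ({i0, i1, i2, i3} : Finset (Fin n)) →
        f j * v j = 0 := by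
      intro j _ hj
      simp only [Finset.mem_insert, Finset.mem_singleton, not_or] at hj
      simp [hv, hj.1, hj.2.1, hj.2.2.1, hj.2.2.2]
    rw [← Finset.sum_subset (Finset.subset_univ _) h1]
    rw [Finset.sum_insert (by simp [h01, h02, h03]),
        Finset.sum_insert (by simp [h12, h13]),
        Finset.sum_insert (by simp [h23]), Finset.sum_singleton]
    simp only [hv, if_pos rfl, if_neg (Ne.symm h01), if_neg (Ne.symm h02),
      if_neg (Ne.symm h03), if_neg (Ne.symm h12), if_neg (Ne.symm h13),
      if_neg (Ne.symm h23)]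
    norm_num
    ring
  have hvsum : ∑ i, v i = 0 := by
    have h := hkey (fun _ => 1)
    simp only [one_mul] at h
    rw [h]; ring
  refine ⟨v, hvsum, ?_⟩
  -- values of Δ
  have hval : ∀ (i j : Fin n) (k : ℕ),
      (min ((i : ℤ) - (j : ℤ)).natAbs (n - ((i : ℤ) - (j : ℤ)).natAbs) = k) →
      Δ i j = L / n * k := fun i j k hk => by rw [hΔ, hk]
  have d00 : Δ i0 i0 = L / n * (0 : ℕ) := hval _ _ 0 (by omega)
  have d11 : Δ i1 i1 = L / n * (0 : ℕ) := hval _ _ 0 (by omega)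
  have d22 : Δ i2 i2 = L / n * (0 : ℕ) := hval _ _ 0 (by omega)
  have d33 : Δ i3 i3 = L / n * (0 : ℕ) := hval _ _ 0 (by omega)
  have d01 : Δ i0 i1 = L / n * (1 : ℕ) := hval _ _ 1 (by omega)
  have d10 : Δ i1 i0 = L / n * (1 : ℕ) := hval _ _ 1 (by omega)
  have d02 : Δ i0 i2 = L / n * (m : ℕ) := hval _ _ m (by omega)
  have d20 : Δ i2 i0 = L / n * (m : ℕ) := hval _ _ m (by omega)
  have d03 : Δ i0 i3 = L / n * ((n - m - 1 : ℕ)) := hval _ _ _ (by omega)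
  have d30 : Δ i3 i0 = L / n * ((n - m - 1 : ℕ)) := hval _ _ _ (by omega)
  have d12 : Δ i1 i2 = L / n * ((m - 1 : ℕ)) := hval _ _ _ (by omega)
  have d21 : Δ i2 i1 = L / n * ((m - 1 : ℕ)) := hval _ _ _ (by omega)
  have d13 : Δ i1 i3 = L / n * (m : ℕ) := hval _ _ m (by omega)
  have d31 : Δ i3 i1 = L / n * (m : ℕ) := hval _ _ m (by omega)
  have d23 : Δ i2 i3 = L / n * (1 : ℕ) := hval _ _ 1 (by omega)
  have d32 : Δ i3 i2 = L / n * (1 : ℕ) := hval _ _ 1 (by omega)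
  have houter : ∑ i, ∑ j, v i * v j * Δ i j ^ 2
      = ∑ i, (Δ i i0 ^ 2 - Δ i i1 ^ 2 + Δ i i2 ^ 2 - Δ i i3 ^ 2) * v i := by
    refine Finset.sum_congr rfl fun i _ => ?_
    have h := hkey (fun j => v i * Δ i j ^ 2)
    calc ∑ j, v i * v j * Δ i j ^ 2
        = ∑ j, (v i * Δ i j ^ 2) * v j := Finset.sum_congr rfl fun j _ => by ring
      _ = v i * Δ i i0 ^ 2 - v i * Δ i i1 ^ 2 + v i * Δ i i2 ^ 2 - v i * Δ i i3 ^ 2 := h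
      _ = (Δ i i0 ^ 2 - Δ i i1 ^ 2 + Δ i i2 ^ 2 - Δ i i3 ^ 2) * v i := by ring
  rw [houter, hkey (fun i => Δ i i0 ^ 2 - Δ i i1 ^ 2 + Δ i i2 ^ 2 - Δ i i3 ^ 2)]
  rw [d00, d11, d22, d33, d01, d10, d02, d20, d03, d30, d12, d21, d13, d31, d23, d32]
  have hc1 : ((m - 1 : ℕ) : ℝ) = (m : ℝ) - 1 := by
    have : (1:ℕ) ≤ m := by omega
    push_cast [this]; ring
  have hc2 : ((n - m - 1 : ℕ) : ℝ) = (n : ℝ) - m - 1 := by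
    have : m + 1 ≤ n := by omega
    push_cast [Nat.sub_sub, this]; ring
  rw [hc1, hc2]
  have hcm : (2 : ℝ) ≤ (m : ℝ) := by exact_mod_cast hmn.2.2
  have hr : 0 < L / n := div_pos hL (by positivity)
  have hpar : n = 2 * m ∨ n = 2 * m + 1 := by omega
  have hm0 : (0:ℝ) < 2 * m := by linarith
  rcases hpar with hp | hp
  · have hnr : (n : ℝ) = 2 * m := by exact_mod_cast congrArg (Nat.cast : ℕ → ℝ) hp
    rw [hnr]
    refine lt_of_lt_of_eq
      (mul_pos (pow_pos (div_pos hL hm0) 2) (show (0:ℝ) < 8 * m - 8 by linarith)) ?_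
    ring
  · have hnr : (n : ℝ) = 2 * m + 1 := by exact_mod_cast congrArg (Nat.cast : ℕ → ℝ) hp
    rw [hnr]
    refine lt_of_lt_of_eq
      (mul_pos (pow_pos (div_pos hL (by linarith : (0:ℝ) < 2 * m + 1)) 2)
        (show (0:ℝ) < 4 * m - 6 by linarith)) ?_
    ring
lemma quadform_eq (n : ℕ) (A : Matrix (Fin n) (Fin n) ℝ) (v : Fin n → ℝ)
    (hv : ∑ i, v i = 0) :
    v ⬝ᵥ ((centeringMatrix n * A * centeringMatrix n) *ᵥ v)
      = ∑ i, ∑ j, v i * v j * A i j := by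
  have hPv : centeringMatrix n *ᵥ v = v := by
    funext i
    simp only [centeringMatrix, mulVec, dotProduct, Matrix.sub_apply,
      Matrix.smul_apply, Matrix.of_apply, smul_eq_mul, mul_one, sub_mul,
      Finset.sum_sub_distrib, ← Finset.mul_sum, hv, mul_zero, sub_zero]
    simp [Matrix.one_apply, Finset.sum_ite_eq, Finset.mem_univ]
  have hvP : v ᵥ* centeringMatrix n = v := by
    funext i
    simp only [centeringMatrix, vecMul, dotProduct, Matrix.sub_apply,
      Matrix.smul_apply, Matrix.of_apply, smul_eq_mul, mul_one, mul_sub,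
      Finset.sum_sub_distrib, ← Finset.sum_mul, hv, zero_mul, sub_zero]
    simp [Matrix.one_apply, hv]
  rw [← mulVec_mulVec, hPv, ← mulVec_mulVec, dotProduct_mulVec, hvP]
  simp only [dotProduct, mulVec, Finset.mul_sum]
  refine Finset.sum_congr rfl fun i _ => Finset.sum_congr rfl fun j _ => by ring

/-- The arc-distance matrix of n points equally spaced (at spacing L/n) along a
closed curve of total length L: Δᵢⱼ = (L/n)·min(|i-j|, n-|i-j|).  (It depends
only on n and L, not on the shape of the curve.)  For n ≥ 4 it is not a matrix
of Euclidean distances: no configuration realizes it, and equivalently the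
doubly centered matrix -(1/2) P [Δᵢⱼ²] P has a negative eigenvalue. -/
theorem stmt17 (n : ℕ) (hn : 4 ≤ n) (L : ℝ) (hL : 0 < L)
    (Δ : Matrix (Fin n) (Fin n) ℝ)
    (hΔ : ∀ i j : Fin n, Δ i j =
      (L / n) * (min ((i : ℤ) - (j : ℤ)).natAbs (n - ((i : ℤ) - (j : ℤ)).natAbs) : ℕ)) :
    (¬ ∃ (p : ℕ) (z : Fin n → EuclideanSpace ℝ (Fin p)),
        ∀ i j, Δ i j = ‖z i - z j‖) ∧
    (∃ v : Fin n → ℝ,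
      v ⬝ᵥ ((-(1 / 2 : ℝ) •
        (centeringMatrix n * Matrix.of (fun i j => (Δ i j) ^ 2) * centeringMatrix n)) *ᵥ v)
        < 0) := by
  obtain ⟨v, hvsum, hvpos⟩ := quad_pos n hn L hL Δ hΔ
  constructor
  · rintro ⟨p, z, hz⟩
    have hsch := schoenberg_aux v hvsum z
    have heq : ∑ i, ∑ j, v i * v j * (Δ i j) ^ 2
        = ∑ i, ∑ j, v i * v j * ‖z i - z j‖ ^ 2 :=
      Finset.sum_congr rfl fun i _ => Finset.sum_congr rfl fun j _ => by rw [hz]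
    rw [heq] at hvpos
    linarith
  · refine ⟨v, ?_⟩
    rw [smul_mulVec, dotProduct_smul, smul_eq_mul,
      quadform_eq n _ v hvsum]
    have : ∑ i, ∑ j, v i * v j * (Matrix.of (fun i j => (Δ i j) ^ 2)) i j
        = ∑ i, ∑ j, v i * v j * (Δ i j) ^ 2 := rfl
    rw [this]
    linarith
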